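/- Let J = A - (μ/W) B - ν I where A = x y^T is a rank-one N×N real matrix with x = β (β_i > 0), y_i = Λ χ'_i + (μ/W^2) β_i Q_i, B = diag(β_1,...,β_N), W = Σ_i β_i Q_i > 0, Q_i ≥ 0, μ, Λ > 0, and χ'_i < 0 for all i. Then for every ν ≥ 0, det(J) = (-1)^{N-1} (∏_i (β_i μ/W + ν)) (Σ_i (β_i^2 Q_i μ/W^2 + Λ β_i χ'_i)/(β_i μ/W + ν) - 1) ≠ 0. -/

import Mathlib

open Matrix Finset

/-- Determinant of the shifted fluid Jacobian `J - ν I = x yᵀ - (μ/W) B - ν I`: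
it equals the explicit product formula and is nonzero for every `ν ≥ 0`. -/
theorem fluid_jacobian_det_ne_zero (N : ℕ) (hN : 1 ≤ N)
    (β Q χ' : Fin N → ℝ) (μ Λ W ν : ℝ)
    (hβ : ∀ i, 0 < β i) (hQ : ∀ i, 0 ≤ Q i) (hχ' : ∀ i, χ' i < 0)
    (hμ : 0 < μ) (hΛ : 0 < Λ) (hν : 0 ≤ ν)
    (hW : W = ∑ i, β i * Q i) (hWpos : 0 < W) :
    (Matrix.vecMulVec β (fun i => Λ * χ' i + (μ / W ^ 2) * β i * Q i) -
        Matrix.diagonal (fun i => β i * μ / W + ν)).det =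
      (-1 : ℝ) ^ (N - 1) * (∏ i, (β i * μ / W + ν)) *
        ((∑ i, (β i ^ 2 * Q i * μ / W ^ 2 + Λ * β i * χ' i) / (β i * μ / W + ν)) - 1) ∧
    (Matrix.vecMulVec β (fun i => Λ * χ' i + (μ / W ^ 2) * β i * Q i) -
        Matrix.diagonal (fun i => β i * μ / W + ν)).det ≠ 0 := by
  set d : Fin N → ℝ := fun i => β i * μ / W + ν with hd
  set y : Fin N → ℝ := fun i => Λ * χ' i + (μ / W ^ 2) * β i * Q i with hy
  have hWne : W ≠ 0 := hWpos.ne'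
  have hdpos : ∀ i, 0 < d i := fun i =>
    add_pos_of_pos_of_nonneg (div_pos (mul_pos (hβ i) hμ) hWpos) hν
  have hdet0 : (∏ i, (-d i)) ≠ 0 :=
    Finset.prod_ne_zero_iff.mpr fun i _ => neg_ne_zero.mpr (hdpos i).ne'
  have hfac : Matrix.vecMulVec β y - Matrix.diagonal d =
      Matrix.diagonal (fun i => -d i) *
        (1 + Matrix.replicateCol (Fin 1) (fun i => (-d i)⁻¹ * β i) * Matrix.replicateRow (Fin 1) y) := by
    rw [Matrix.mul_add, Matrix.mul_one, ← Matrix.mul_assoc]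
    have hcol : Matrix.diagonal (fun i => -d i) *
        Matrix.replicateCol (Fin 1) (fun i => (-d i)⁻¹ * β i) = Matrix.replicateCol (Fin 1) β := by
      ext i j
      simp only [Matrix.diagonal_mul, Matrix.replicateCol_apply]
      rw [← mul_assoc, mul_inv_cancel₀ (neg_ne_zero.mpr (hdpos i).ne'), one_mul]
    rw [hcol]; erw [← Matrix.vecMulVec_eq (ι := Fin 1)]
    ext i j
    by_cases h : i = j <;>
      simp [Matrix.diagonal_apply, h, sub_eq_add_neg, add_comm]
  have hdetformula : (Matrix.vecMulVec β y - Matrix.diagonal d).det =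
      (∏ i, (-d i)) * (1 + ∑ i, y i * ((-d i)⁻¹ * β i)) := by
    rw [hfac, Matrix.det_mul, Matrix.det_diagonal]; erw [Matrix.det_one_add_replicateCol_mul_replicateRow (ι := Fin 1)]
    rfl
  have hsum : ∑ i, y i * ((-d i)⁻¹ * β i)
      = -∑ i, (β i ^ 2 * Q i * μ / W ^ 2 + Λ * β i * χ' i) / d i := by
    rw [← Finset.sum_neg_distrib]
    apply Finset.sum_congr rfl
    intro i _
    have hnum : y i * β i = β i ^ 2 * Q i * μ / W ^ 2 + Λ * β i * χ' i := by
      rw [hy]; ring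
    rw [inv_neg, div_eq_mul_inv, ← hnum]
    ring
  have hprod : (∏ i, (-d i)) = (-1 : ℝ) ^ N * ∏ i, d i := by
    have : ∀ i ∈ (Finset.univ : Finset (Fin N)), -d i = (-1 : ℝ) * d i := by
      intro i _; ring
    rw [Finset.prod_congr rfl this, Finset.prod_mul_distrib, Finset.prod_const,
      Finset.card_univ, Fintype.card_fin]
  have hpow : (-1 : ℝ) ^ N = -(-1 : ℝ) ^ (N - 1) := by
    conv_lhs => rw [← Nat.sub_add_cancel hN]
    rw [pow_succ]
    ring
  have heq : (Matrix.vecMulVec β y - Matrix.diagonal d).det =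
      (-1 : ℝ) ^ (N - 1) * (∏ i, d i) *
        ((∑ i, (β i ^ 2 * Q i * μ / W ^ 2 + Λ * β i * χ' i) / d i) - 1) := by
    rw [hdetformula, hsum, hprod, hpow]; ring
  refine ⟨heq, ?_⟩
  rw [heq]
  have hS : (∑ i, (β i ^ 2 * Q i * μ / W ^ 2 + Λ * β i * χ' i) / d i) < 1 := by
    have hsplit : ∀ i ∈ Finset.univ, (β i ^ 2 * Q i * μ / W ^ 2 + Λ * β i * χ' i) / d i
        = β i ^ 2 * Q i * μ / W ^ 2 / d i + Λ * β i * χ' i / d i := fun i _ => add_div _ _ _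
    rw [Finset.sum_congr rfl hsplit, Finset.sum_add_distrib]
    have h1 : ∑ i, β i ^ 2 * Q i * μ / W ^ 2 / d i ≤ 1 := by
      have hterm : ∀ i ∈ Finset.univ, β i ^ 2 * Q i * μ / W ^ 2 / d i ≤ β i * Q i / W := by
        intro i _
        have hle : β i * μ / W ≤ d i := le_add_of_nonneg_right hν
        have hnum : (0:ℝ) ≤ β i ^ 2 * Q i * μ / W ^ 2 :=
          div_nonneg (mul_nonneg (mul_nonneg (by positivity) (hQ i)) hμ.le) (by positivity)
        have h2 : β i ^ 2 * Q i * μ / W ^ 2 / (β i * μ / W) = β i * Q i / W := by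
          field_simp [(hβ i).ne', hμ.ne']
        calc β i ^ 2 * Q i * μ / W ^ 2 / d i
            ≤ β i ^ 2 * Q i * μ / W ^ 2 / (β i * μ / W) :=
              div_le_div_of_nonneg_left hnum (div_pos (mul_pos (hβ i) hμ) hWpos) hle
          _ = β i * Q i / W := h2
      calc ∑ i, β i ^ 2 * Q i * μ / W ^ 2 / d i ≤ ∑ i, β i * Q i / W :=
            Finset.sum_le_sum hterm
        _ = 1 := by rw [← Finset.sum_div, ← hW, div_self hWne]
    have h2 : ∑ i, Λ * β i * χ' i / d i < 0 := by
      have hne : (Finset.univ : Finset (Fin N)).Nonempty := by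
        have : Nonempty (Fin N) := ⟨⟨0, hN⟩⟩
        exact Finset.univ_nonempty
      exact Finset.sum_neg (fun i _ =>
        div_neg_of_neg_of_pos (mul_neg_of_pos_of_neg (mul_pos hΛ (hβ i)) (hχ' i)) (hdpos i)) hne
    linarith
  exact mul_ne_zero
    (mul_ne_zero (pow_ne_zero _ (by norm_num))
      (Finset.prod_ne_zero_iff.mpr fun i _ => (hdpos i).ne'))
    (by linarith)
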